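/- Let 0 < q < 1 and let n be a nonnegative integer. Suppose a bivariate real polynomial f satisfies f(u,v) = Σ_{i+j+k=n} c_{ijk} B^n_{ijk}(u,v) = Σ_{i+j+k=n} d_{ijk} b^n_{ijk}(u,v) for all real u, v, where c_{ijk}, d_{ijk} are real coefficients. Then for all real u, v with u ≥ 0, v ≥ 0 and u + v ≤ 1: Σ_{i+j+k=n} |d_{ijk}| · b^n_{ijk}(u,v) ≤ Σ_{i+j+k=n} |c_{ijk}| · B^n_{ijk}(u,v). (This expresses that the classical triangular Bernstein basis is better conditioned than the triangular q-Bernstein basis: cond(b; f, (u,v)) ≤ cond(B; f, (u,v)), where cond(w; f, x) = (Σ_i |γ_i w_i(x)|)/‖f‖_∞ for f = Σ_i γ_i w_i.) -/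

import Mathlib

open Finset

/-- The q-integer [r] = 1 + q + ... + q^(r-1). -/
noncomputable def qInt (q : ℝ) (r : ℕ) : ℝ := ∑ s ∈ Finset.range r, q ^ s

/-- The q-factorial [r]!. -/
noncomputable def qFact (q : ℝ) : ℕ → ℝ
  | 0 => 1
  | r + 1 => qInt q (r + 1) * qFact q r

/-- The q-binomial coefficient [i choose j]_q (zero unless i ≥ j ≥ 0). -/
noncomputable def qBinom (q : ℝ) (i j : ℕ) : ℝ :=
  if j ≤ i then qFact q i / (qFact q j * qFact q (i - j)) else 0

/-- The q-binomial coefficient with integer indices, zero unless i ≥ j ≥ 0. -/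
noncomputable def qBinomZ (q : ℝ) (i j : ℤ) : ℝ :=
  if 0 ≤ j ∧ j ≤ i then qFact q i.toNat / (qFact q j.toNat * qFact q (i - j).toNat) else 0

/-- The triangular q-Bernstein polynomial B^n_{ijk}(u,v)
    (meaningful for i + j + k = n). -/
noncomputable def triB (q : ℝ) (n i j k : ℕ) (u v : ℝ) : ℝ :=
  qBinom q n k * (Nat.choose (i + j) i : ℝ) * u ^ i * v ^ j *
    ∏ s ∈ Finset.range k, (1 - q ^ s * u - q ^ s * v)

/-- The triangular q-Bernstein polynomial with integer indices; by convention it is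
    zero whenever any of the indices is negative. -/
noncomputable def triBZ (q : ℝ) (n : ℕ) (i j k : ℤ) (u v : ℝ) : ℝ :=
  if 0 ≤ i ∧ 0 ≤ j ∧ 0 ≤ k then triB q n i.toNat j.toNat k.toNat u v else 0

/-- The classical triangular Bernstein polynomial b^n_{ijk}(u,v). -/
noncomputable def triBern (n i j k : ℕ) (u v : ℝ) : ℝ :=
  (Nat.factorial n : ℝ) /
      ((Nat.factorial i : ℝ) * (Nat.factorial j : ℝ) * (Nat.factorial k : ℝ)) *
    u ^ i * v ^ j * (1 - u - v) ^ k

/-- The set of triples (i, j, k) of nonnegative integers with i + j + k = n. -/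
def simplex (n : ℕ) : Finset (ℕ × ℕ × ℕ) :=
  (Finset.range (n + 1) ×ˢ Finset.range (n + 1) ×ˢ Finset.range (n + 1)).filter
    (fun p => p.1 + p.2.1 + p.2.2 = n)


section Aux
variable {q : ℝ}

lemma qInt_pos (hq0 : 0 < q) {r : ℕ} (hr : 0 < r) : 0 < qInt q r := by
  unfold qInt
  apply Finset.sum_pos (fun s _ => pow_pos hq0 s)
  exact Finset.nonempty_range_iff.mpr (by omega)

lemma qFact_pos (hq0 : 0 < q) (r : ℕ) : 0 < qFact q r := by
  induction r with
  | zero => norm_num [qFact]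
  | succ r ih => exact mul_pos (qInt_pos hq0 (Nat.succ_pos r)) ih

lemma qBinom_nonneg (hq0 : 0 < q) (i j : ℕ) : 0 ≤ qBinom q i j := by
  unfold qBinom
  split
  · have h1 := qFact_pos (q := q) hq0 i
    have h2 := qFact_pos (q := q) hq0 j
    have h3 := qFact_pos (q := q) hq0 (i - j)
    positivity
  · exact le_refl _

lemma triBern_nonneg {n i j k : ℕ} {u v : ℝ} (hu : 0 ≤ u) (hv : 0 ≤ v) (huv : u + v ≤ 1) :
    0 ≤ triBern n i j k u v := by
  unfold triBern
  have h1 : (0:ℝ) ≤ 1 - u - v := by linarith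
  positivity

lemma mem_simplex {n : ℕ} {p : ℕ × ℕ × ℕ} : p ∈ simplex n ↔ p.1 + p.2.1 + p.2.2 = n := by
  simp only [simplex, Finset.mem_filter, Finset.mem_product, Finset.mem_range]
  omega

end Aux
section BC

/-- f is a nonnegative combination of the degree-m triangular Bernstein basis. -/
def IsBC (m : ℕ) (f : ℝ → ℝ → ℝ) : Prop :=
  ∃ e : ℕ × ℕ × ℕ → ℝ, (∀ r ∈ simplex m, 0 ≤ e r) ∧
    ∀ u v : ℝ, f u v = ∑ r ∈ simplex m, e r * triBern m r.1 r.2.1 r.2.2 u v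

lemma IsBC_congr {m : ℕ} {f g : ℝ → ℝ → ℝ} (h : ∀ u v, f u v = g u v) (hf : IsBC m f) :
    IsBC m g := by
  obtain ⟨e, he, hfe⟩ := hf
  exact ⟨e, he, fun u v => (h u v) ▸ hfe u v⟩

lemma IsBC_zero (m : ℕ) : IsBC m (fun _ _ => 0) :=
  ⟨fun _ => 0, fun _ _ => le_refl _, fun u v => by simp⟩

lemma IsBC_add {m : ℕ} {f g : ℝ → ℝ → ℝ} (hf : IsBC m f) (hg : IsBC m g) :
    IsBC m (fun u v => f u v + g u v) := by
  obtain ⟨e1, he1, hf1⟩ := hf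
  obtain ⟨e2, he2, hg2⟩ := hg
  refine ⟨fun r => e1 r + e2 r, fun r hr => add_nonneg (he1 r hr) (he2 r hr), fun u v => ?_⟩
  dsimp only
  rw [hf1, hg2, ← Finset.sum_add_distrib]
  exact Finset.sum_congr rfl fun r _ => by ring

lemma IsBC_smul {m : ℕ} {f : ℝ → ℝ → ℝ} (cst : ℝ) (hc : 0 ≤ cst) (hf : IsBC m f) :
    IsBC m (fun u v => cst * f u v) := by
  obtain ⟨e, he, hfe⟩ := hf
  refine ⟨fun r => cst * e r, fun r hr => mul_nonneg hc (he r hr), fun u v => ?_⟩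
  dsimp only
  rw [hfe, Finset.mul_sum]
  exact Finset.sum_congr rfl fun r _ => by ring

lemma IsBC_sum {ι : Type*} [DecidableEq ι] {m : ℕ} (s : Finset ι) (f : ι → ℝ → ℝ → ℝ)
    (h : ∀ i ∈ s, IsBC m (f i)) :
    IsBC m (fun u v => ∑ i ∈ s, f i u v) := by
  induction s using Finset.induction_on with
  | empty => exact IsBC_congr (by simp) (IsBC_zero m)
  | @insert x s hx ih =>
      have h1 := IsBC_add (h x (Finset.mem_insert_self x s))
        (ih (fun i hi => h i (Finset.mem_insert_of_mem hi)))
      exact IsBC_congr (fun u v => by rw [Finset.sum_insert hx]) h1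

lemma IsBC_basis {m i j k : ℕ} (h : (i, j, k) ∈ simplex m) (cst : ℝ) (hc : 0 ≤ cst) :
    IsBC m (fun u v => cst * triBern m i j k u v) := by
  classical
  refine ⟨fun p => if p = (i, j, k) then cst else 0, fun r _ => by dsimp only; split <;> simp [hc],
    fun u v => ?_⟩
  rw [Finset.sum_eq_single (i, j, k)]
  · simp
  · intro b _ hb; simp [hb]
  · intro hb; exact absurd h hb

lemma elev_u (m i j k : ℕ) (u v : ℝ) :
    u * triBern m i j k u v = ((i + 1 : ℝ) / (m + 1)) * triBern (m+1) (i+1) j k u v := by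
  unfold triBern
  rw [Nat.factorial_succ, Nat.factorial_succ]
  have h1 : (Nat.factorial i : ℝ) ≠ 0 := Nat.cast_ne_zero.mpr (Nat.factorial_ne_zero i)
  have h2 : (Nat.factorial j : ℝ) ≠ 0 := Nat.cast_ne_zero.mpr (Nat.factorial_ne_zero j)
  have h3 : (Nat.factorial k : ℝ) ≠ 0 := Nat.cast_ne_zero.mpr (Nat.factorial_ne_zero k)
  have h4 : (m : ℝ) + 1 ≠ 0 := by positivity
  have h5 : (i : ℝ) + 1 ≠ 0 := by positivity
  push_cast
  field_simp
  ring

lemma elev_v (m i j k : ℕ) (u v : ℝ) :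
    v * triBern m i j k u v = ((j + 1 : ℝ) / (m + 1)) * triBern (m+1) i (j+1) k u v := by
  unfold triBern
  rw [Nat.factorial_succ, Nat.factorial_succ]
  have h1 : (Nat.factorial i : ℝ) ≠ 0 := Nat.cast_ne_zero.mpr (Nat.factorial_ne_zero i)
  have h2 : (Nat.factorial j : ℝ) ≠ 0 := Nat.cast_ne_zero.mpr (Nat.factorial_ne_zero j)
  have h3 : (Nat.factorial k : ℝ) ≠ 0 := Nat.cast_ne_zero.mpr (Nat.factorial_ne_zero k)
  have h4 : (m : ℝ) + 1 ≠ 0 := by positivity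
  have h5 : (j : ℝ) + 1 ≠ 0 := by positivity
  push_cast
  field_simp
  ring

lemma elev_w (m i j k : ℕ) (u v : ℝ) :
    (1 - u - v) * triBern m i j k u v = ((k + 1 : ℝ) / (m + 1)) * triBern (m+1) i j (k+1) u v := by
  unfold triBern
  rw [Nat.factorial_succ, Nat.factorial_succ]
  have h1 : (Nat.factorial i : ℝ) ≠ 0 := Nat.cast_ne_zero.mpr (Nat.factorial_ne_zero i)
  have h2 : (Nat.factorial j : ℝ) ≠ 0 := Nat.cast_ne_zero.mpr (Nat.factorial_ne_zero j)
  have h3 : (Nat.factorial k : ℝ) ≠ 0 := Nat.cast_ne_zero.mpr (Nat.factorial_ne_zero k)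
  have h4 : (m : ℝ) + 1 ≠ 0 := by positivity
  have h5 : (k : ℝ) + 1 ≠ 0 := by positivity
  push_cast
  field_simp
  ring

lemma IsBC_mul_u {m : ℕ} {f : ℝ → ℝ → ℝ} (hf : IsBC m f) :
    IsBC (m + 1) (fun u v => u * f u v) := by
  obtain ⟨e, he, hfe⟩ := hf
  have key : ∀ u v : ℝ, u * f u v = ∑ r ∈ simplex m,
      (e r * ((r.1 + 1 : ℝ) / (m + 1))) * triBern (m+1) (r.1+1) r.2.1 r.2.2 u v := by
    intro u v
    rw [hfe, Finset.mul_sum]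
    refine Finset.sum_congr rfl fun r _ => ?_
    rw [show u * (e r * triBern m r.1 r.2.1 r.2.2 u v)
        = e r * (u * triBern m r.1 r.2.1 r.2.2 u v) by ring, elev_u]
    ring
  refine IsBC_congr (fun u v => (key u v).symm) (IsBC_sum (simplex m) _ fun r hr => ?_)
  have hmem : ((r.1+1, r.2.1, r.2.2) : ℕ × ℕ × ℕ) ∈ simplex (m+1) := by
    simp only [mem_simplex] at hr ⊢; omega
  exact IsBC_basis hmem _ (mul_nonneg (he r hr) (by positivity))

lemma IsBC_mul_v {m : ℕ} {f : ℝ → ℝ → ℝ} (hf : IsBC m f) :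
    IsBC (m + 1) (fun u v => v * f u v) := by
  obtain ⟨e, he, hfe⟩ := hf
  have key : ∀ u v : ℝ, v * f u v = ∑ r ∈ simplex m,
      (e r * ((r.2.1 + 1 : ℝ) / (m + 1))) * triBern (m+1) r.1 (r.2.1+1) r.2.2 u v := by
    intro u v
    rw [hfe, Finset.mul_sum]
    refine Finset.sum_congr rfl fun r _ => ?_
    rw [show v * (e r * triBern m r.1 r.2.1 r.2.2 u v)
        = e r * (v * triBern m r.1 r.2.1 r.2.2 u v) by ring, elev_v]
    ring
  refine IsBC_congr (fun u v => (key u v).symm) (IsBC_sum (simplex m) _ fun r hr => ?_)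
  have hmem : ((r.1, r.2.1+1, r.2.2) : ℕ × ℕ × ℕ) ∈ simplex (m+1) := by
    simp only [mem_simplex] at hr ⊢; omega
  exact IsBC_basis hmem _ (mul_nonneg (he r hr) (by positivity))

lemma IsBC_mul_w {m : ℕ} {f : ℝ → ℝ → ℝ} (hf : IsBC m f) :
    IsBC (m + 1) (fun u v => (1 - u - v) * f u v) := by
  obtain ⟨e, he, hfe⟩ := hf
  have key : ∀ u v : ℝ, (1 - u - v) * f u v = ∑ r ∈ simplex m,
      (e r * ((r.2.2 + 1 : ℝ) / (m + 1))) * triBern (m+1) r.1 r.2.1 (r.2.2+1) u v := by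
    intro u v
    rw [hfe, Finset.mul_sum]
    refine Finset.sum_congr rfl fun r _ => ?_
    rw [show (1 - u - v) * (e r * triBern m r.1 r.2.1 r.2.2 u v)
        = e r * ((1 - u - v) * triBern m r.1 r.2.1 r.2.2 u v) by ring, elev_w]
    ring
  refine IsBC_congr (fun u v => (key u v).symm) (IsBC_sum (simplex m) _ fun r hr => ?_)
  have hmem : ((r.1, r.2.1, r.2.2+1) : ℕ × ℕ × ℕ) ∈ simplex (m+1) := by
    simp only [mem_simplex] at hr ⊢; omega
  exact IsBC_basis hmem _ (mul_nonneg (he r hr) (by positivity))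

end BC
section Key

lemma key_isBC (q : ℝ) (hq0 : 0 < q) (hq1 : q < 1) :
    ∀ (k i j : ℕ), IsBC (i + j + k)
      (fun u v => u ^ i * v ^ j * ∏ s ∈ Finset.range k, (1 - q ^ s * u - q ^ s * v)) := by
  intro k
  induction k with
  | zero =>
      intro i j
      have hmem : ((i, j, 0) : ℕ × ℕ × ℕ) ∈ simplex (i + j + 0) := by
        simp [mem_simplex]
      have h1 : (Nat.factorial i : ℝ) ≠ 0 := Nat.cast_ne_zero.mpr (Nat.factorial_ne_zero i)
      have h2 : (Nat.factorial j : ℝ) ≠ 0 := Nat.cast_ne_zero.mpr (Nat.factorial_ne_zero j)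
      have h3 : (Nat.factorial (i+j) : ℝ) ≠ 0 :=
        Nat.cast_ne_zero.mpr (Nat.factorial_ne_zero (i+j))
      refine IsBC_congr (f := fun u v =>
        ((Nat.factorial i : ℝ) * (Nat.factorial j : ℝ) / (Nat.factorial (i+j) : ℝ)) *
          triBern (i+j+0) i j 0 u v) (fun u v => ?_) (IsBC_basis hmem _ (by positivity))
      unfold triBern
      simp only [Nat.add_zero, Finset.prod_range_zero, pow_zero, Nat.factorial_zero,
        Nat.cast_one]
      field_simp
  | succ k ih =>
      intro i j
      have h0 : (0:ℝ) ≤ 1 - q ^ k := by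
        have := pow_le_one₀ (le_of_lt hq0) (le_of_lt hq1) (n := k)
        linarith
      have hA := IsBC_smul _ h0 (IsBC_mul_u (ih i j))
      have hB := IsBC_smul _ h0 (IsBC_mul_v (ih i j))
      have hC := IsBC_mul_w (ih i j)
      have hsum := IsBC_add (IsBC_add hA hB) hC
      have heq : i + j + k + 1 = i + j + (k + 1) := by omega
      rw [heq] at hsum
      refine IsBC_congr (fun u v => ?_) hsum
      rw [Finset.prod_range_succ]
      ring

lemma triB_isBC {q : ℝ} (hq0 : 0 < q) (hq1 : q < 1) {n i j k : ℕ} (h : i + j + k = n) :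
    IsBC n (fun u v => triB q n i j k u v) := by
  have hk := key_isBC q hq0 hq1 k i j
  rw [h] at hk
  have hc : (0:ℝ) ≤ qBinom q n k * (Nat.choose (i + j) i : ℝ) :=
    mul_nonneg (qBinom_nonneg hq0 n k) (Nat.cast_nonneg _)
  refine IsBC_congr (fun u v => ?_) (IsBC_smul _ hc hk)
  unfold triB
  ring

end Key
section Indep

lemma bern1_indep (n : ℕ) (a : ℕ → ℝ)
    (h : ∀ u : ℝ, ∑ i ∈ Finset.range (n+1), a i * u ^ i * (1 - u) ^ (n - i) = 0) :
    ∀ i ∈ Finset.range (n+1), a i = 0 := by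
  classical
  set p : Polynomial ℝ :=
    ∑ i ∈ Finset.range (n+1), Polynomial.C (a i) * Polynomial.X ^ i with hp
  have hroot : ∀ x : ℝ, 0 < x → p.eval x = 0 := by
    intro x hx
    have hx1 : (0:ℝ) < 1 + x := by linarith
    have h1 : (1:ℝ) - x / (1+x) = 1 / (1+x) := by field_simp; ring
    have key : ∀ i ∈ Finset.range (n+1),
        a i * x ^ i = a i * (x/(1+x)) ^ i * (1 - x/(1+x)) ^ (n-i) * (1+x) ^ n := by
      intro i hi
      have hin : i ≤ n := Finset.mem_range_succ_iff.mp hi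
      rw [h1, div_pow, div_pow, one_pow,
        show (1+x) ^ n = (1+x) ^ i * (1+x) ^ (n-i) by rw [← pow_add]; congr 1; omega]
      field_simp
    have : p.eval x = (∑ i ∈ Finset.range (n+1),
        a i * (x/(1+x)) ^ i * (1 - x/(1+x)) ^ (n-i)) * (1+x) ^ n := by
      rw [Finset.sum_mul, hp, Polynomial.eval_finset_sum]
      refine Finset.sum_congr rfl fun i hi => ?_
      simp only [Polynomial.eval_mul, Polynomial.eval_C, Polynomial.eval_pow,
        Polynomial.eval_X]
      exact key i hi
    rw [this, h (x/(1+x)), zero_mul]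
  have hp0 : p = 0 := by
    apply Polynomial.eq_zero_of_infinite_isRoot
    apply Set.Infinite.mono (s := Set.Ioi (0:ℝ)) ?_ (Set.Ioi_infinite 0)
    intro x hx
    exact hroot x hx
  intro i hi
  have hco := congrArg (fun r : Polynomial ℝ => r.coeff i) hp0
  simp only [hp, Polynomial.finset_sum_coeff, Polynomial.coeff_C_mul,
    Polynomial.coeff_X_pow, Polynomial.coeff_zero, mul_ite, mul_one, mul_zero,
    ] at hco
  rwa [Finset.sum_ite_eq (Finset.range (n+1)) i a, if_pos hi] at hco

end Indep
section Indep2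

lemma sum_simplex (n : ℕ) (F : ℕ × ℕ × ℕ → ℝ) :
    ∑ p ∈ simplex n, F p =
      ∑ i ∈ Finset.range (n+1), ∑ j ∈ Finset.range (n+1-i), F (i, j, n-i-j) := by
  rw [Finset.sum_sigma']
  refine Finset.sum_bij' (fun p _ => (⟨p.1, p.2.1⟩ : (_ : ℕ) × ℕ))
    (fun x _ => ((x.1, x.2, n - x.1 - x.2) : ℕ × ℕ × ℕ)) ?_ ?_ ?_ ?_ ?_
  · intro p hp
    simp only [mem_simplex] at hp
    simp only [Finset.mem_sigma, Finset.mem_range]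
    omega
  · intro x hx
    simp only [Finset.mem_sigma, Finset.mem_range] at hx
    simp only [mem_simplex]
    omega
  · intro p hp
    simp only [mem_simplex] at hp
    obtain ⟨i, j, k⟩ := p
    simp only at hp ⊢
    have hk : n - i - j = k := by omega
    rw [hk]
  · intro x _
    rfl
  · intro p hp
    simp only [mem_simplex] at hp
    obtain ⟨i, j, k⟩ := p
    simp only at hp ⊢
    have hk : n - i - j = k := by omega
    rw [hk]

lemma bern2_indep (n : ℕ) (e : ℕ × ℕ × ℕ → ℝ)
    (h : ∀ u v : ℝ, ∑ p ∈ simplex n, e p * triBern n p.1 p.2.1 p.2.2 u v = 0) :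
    ∀ p ∈ simplex n, e p = 0 := by
  have key : ∀ u t : ℝ, ∑ i ∈ Finset.range (n+1),
      (∑ j ∈ Finset.range (n+1-i), e (i, j, n-i-j) *
        ((Nat.factorial n : ℝ) / ((Nat.factorial i : ℝ) * (Nat.factorial j : ℝ) *
          (Nat.factorial (n-i-j) : ℝ))) * t ^ j * (1-t) ^ (n-i-j)) *
      u ^ i * (1-u) ^ (n-i) = 0 := by
    intro u t
    have h2 := h u (t * (1-u))
    rw [sum_simplex] at h2
    rw [← h2]
    refine Finset.sum_congr rfl fun i hi => ?_
    rw [Finset.sum_mul, Finset.sum_mul]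
    refine Finset.sum_congr rfl fun j hj => ?_
    simp only [Finset.mem_range] at hi hj
    unfold triBern
    have h3 : (1 : ℝ) - u - t * (1-u) = (1-u) * (1-t) := by ring
    rw [h3, mul_pow, mul_pow]
    have hpow : ((1:ℝ)-u) ^ (n-i) = (1-u) ^ j * (1-u) ^ (n-i-j) := by
      rw [← pow_add]; congr 1; omega
    rw [hpow]
    ring
  intro p hp
  have hpn := mem_simplex.mp hp
  obtain ⟨i, j, k⟩ := p
  simp only at hpn ⊢
  -- first level: for every t, the i-th coefficient vanishes
  have step1 : ∀ t : ℝ, ∀ i' ∈ Finset.range (n+1),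
      (∑ j' ∈ Finset.range (n+1-i'), e (i', j', n-i'-j') *
        ((Nat.factorial n : ℝ) / ((Nat.factorial i' : ℝ) * (Nat.factorial j' : ℝ) *
          (Nat.factorial (n-i'-j') : ℝ))) * t ^ j' * (1-t) ^ (n-i'-j')) = 0 := by
    intro t
    exact bern1_indep n _ (fun u => key u t)
  have hi : i ∈ Finset.range (n+1) := by simp; omega
  have step2 : ∀ j' ∈ Finset.range ((n-i)+1),
      e (i, j', n-i-j') *
        ((Nat.factorial n : ℝ) / ((Nat.factorial i : ℝ) * (Nat.factorial j' : ℝ) *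
          (Nat.factorial (n-i-j') : ℝ))) = 0 := by
    apply bern1_indep (n-i)
    intro t
    have := step1 t i hi
    rw [show (n : ℕ) + 1 - i = (n-i) + 1 by omega] at this
    rw [← this]
  have hj : j ∈ Finset.range ((n-i)+1) := by simp; omega
  have h4 := step2 j hj
  rw [show (n : ℕ) - i - j = k by omega] at h4
  have h1 : (Nat.factorial n : ℝ) ≠ 0 := Nat.cast_ne_zero.mpr (Nat.factorial_ne_zero n)
  have h2 : (0:ℝ) < (Nat.factorial i : ℝ) * (Nat.factorial j : ℝ) * (Nat.factorial k : ℝ) := by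
    have := Nat.factorial_pos i; have := Nat.factorial_pos j; have := Nat.factorial_pos k
    positivity
  have h5 : ((Nat.factorial n : ℝ) / ((Nat.factorial i : ℝ) * (Nat.factorial j : ℝ) *
      (Nat.factorial k : ℝ))) ≠ 0 := by positivity
  exact (mul_eq_zero.mp h4).resolve_right h5

end Indep2
/-- the classical triangular Bernstein basis is better conditioned than the
    triangular q-Bernstein basis. -/
theorem stmt11 (q : ℝ) (hq0 : 0 < q) (hq1 : q < 1) (n : ℕ)
    (c d : ℕ × ℕ × ℕ → ℝ)
    (hrep : ∀ u v : ℝ,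
      ∑ p ∈ simplex n, c p * triB q n p.1 p.2.1 p.2.2 u v =
        ∑ p ∈ simplex n, d p * triBern n p.1 p.2.1 p.2.2 u v)
    (u v : ℝ) (hu : 0 ≤ u) (hv : 0 ≤ v) (huv : u + v ≤ 1) :
    ∑ p ∈ simplex n, |d p| * triBern n p.1 p.2.1 p.2.2 u v ≤
      ∑ p ∈ simplex n, |c p| * triB q n p.1 p.2.1 p.2.2 u v := by
  classical
  -- choose nonnegative Bernstein representations of each q-Bernstein basis element
  have hall : ∀ p : ℕ × ℕ × ℕ, ∃ e : ℕ × ℕ × ℕ → ℝ,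
      (∀ r ∈ simplex n, 0 ≤ e r) ∧
      (p ∈ simplex n → ∀ u' v' : ℝ, triB q n p.1 p.2.1 p.2.2 u' v' =
        ∑ r ∈ simplex n, e r * triBern n r.1 r.2.1 r.2.2 u' v') := by
    intro p
    by_cases hp : p ∈ simplex n
    · obtain ⟨e, he, heq⟩ := triB_isBC hq0 hq1 (mem_simplex.mp hp)
      exact ⟨e, he, fun _ => heq⟩
    · exact ⟨fun _ => 0, fun _ _ => le_refl _, fun hp' => absurd hp' hp⟩
  choose a ha0 haeq using hall
  -- the stated q-Bernstein combination, rewritten in the classical Bernstein basis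
  have h1 : ∀ u' v' : ℝ, ∑ p ∈ simplex n, c p * triB q n p.1 p.2.1 p.2.2 u' v' =
      ∑ r ∈ simplex n, (∑ p ∈ simplex n, c p * a p r) * triBern n r.1 r.2.1 r.2.2 u' v' := by
    intro u' v'
    calc ∑ p ∈ simplex n, c p * triB q n p.1 p.2.1 p.2.2 u' v'
        = ∑ p ∈ simplex n, ∑ r ∈ simplex n,
            c p * a p r * triBern n r.1 r.2.1 r.2.2 u' v' := by
          refine Finset.sum_congr rfl fun p hp => ?_
          rw [haeq p hp, Finset.mul_sum]
          exact Finset.sum_congr rfl fun r _ => by ring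
      _ = ∑ r ∈ simplex n, ∑ p ∈ simplex n,
            c p * a p r * triBern n r.1 r.2.1 r.2.2 u' v' := Finset.sum_comm
      _ = ∑ r ∈ simplex n, (∑ p ∈ simplex n, c p * a p r) *
            triBern n r.1 r.2.1 r.2.2 u' v' := by
          exact Finset.sum_congr rfl fun r _ => (Finset.sum_mul _ _ _).symm
  -- the representation in the Bernstein basis is unique
  have hzero : ∀ u' v' : ℝ, ∑ r ∈ simplex n,
      ((∑ p ∈ simplex n, c p * a p r) - d r) * triBern n r.1 r.2.1 r.2.2 u' v' = 0 := by
    intro u' v'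
    have h2 : ∑ r ∈ simplex n,
        ((∑ p ∈ simplex n, c p * a p r) - d r) * triBern n r.1 r.2.1 r.2.2 u' v' =
        (∑ r ∈ simplex n, (∑ p ∈ simplex n, c p * a p r) * triBern n r.1 r.2.1 r.2.2 u' v') -
        ∑ r ∈ simplex n, d r * triBern n r.1 r.2.1 r.2.2 u' v' := by
      rw [← Finset.sum_sub_distrib]
      exact Finset.sum_congr rfl fun r _ => by ring
    rw [h2, ← h1 u' v', hrep u' v', sub_self]
  have hDd : ∀ r ∈ simplex n, d r = ∑ p ∈ simplex n, c p * a p r := by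
    intro r hr
    have := bern2_indep n (fun r => (∑ p ∈ simplex n, c p * a p r) - d r) hzero r hr
    linarith
  calc ∑ p ∈ simplex n, |d p| * triBern n p.1 p.2.1 p.2.2 u v
      ≤ ∑ r ∈ simplex n, (∑ p ∈ simplex n, |c p| * a p r) * triBern n r.1 r.2.1 r.2.2 u v := by
        refine Finset.sum_le_sum fun r hr => ?_
        refine mul_le_mul_of_nonneg_right ?_ (triBern_nonneg hu hv huv)
        rw [hDd r hr]
        calc |∑ p ∈ simplex n, c p * a p r| ≤ ∑ p ∈ simplex n, |c p * a p r| :=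
              Finset.abs_sum_le_sum_abs _ _
          _ = ∑ p ∈ simplex n, |c p| * a p r := by
              refine Finset.sum_congr rfl fun p hp => ?_
              rw [abs_mul, abs_of_nonneg (ha0 p r hr)]
    _ = ∑ r ∈ simplex n, ∑ p ∈ simplex n,
          |c p| * a p r * triBern n r.1 r.2.1 r.2.2 u v :=
        Finset.sum_congr rfl fun r _ => Finset.sum_mul _ _ _
    _ = ∑ p ∈ simplex n, ∑ r ∈ simplex n,
          |c p| * a p r * triBern n r.1 r.2.1 r.2.2 u v := Finset.sum_comm
    _ = ∑ p ∈ simplex n, |c p| * triB q n p.1 p.2.1 p.2.2 u v := by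
        refine Finset.sum_congr rfl fun p hp => ?_
        rw [haeq p hp u v, Finset.mul_sum]
        exact Finset.sum_congr rfl fun r _ => by ring
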